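/- For n ≥ 1 and 0 ≤ l₁ < l₂ ≤ 1, the pooled interim allocation q̄ = (l₂ⁿ − l₁ⁿ)/(n(l₂ − l₁)) satisfies Border feasibility on the pooled interval: for every l ∈ [l₁, l₂], q̄·(l₂ − l) ≤ (1 − lⁿ)/n − (1 − l₂ⁿ)/n · 1, i.e., ∫_l^{l₂} q̄ ds + ∫_{l₂}^1 s^{n−1} ds ≤ (1 − lⁿ)/n. -/

import Mathlib

open intervalIntegral

/-- Border feasibility of the pooled interim allocation: for `l ∈ [l₁, l₂]`, the
constant allocation `q̄ = (l₂ⁿ − l₁ⁿ)/(n(l₂ − l₁))` on the pooled interval together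
with `s^(n−1)` above `l₂` satisfies the Border tail constraint
`∫_l^{l₂} q̄ + ∫_{l₂}^1 s^(n−1) ≤ (1 − lⁿ)/n`. -/
theorem pooled_allocation_border_feasible
    (n : ℕ) (hn : 1 ≤ n) (l1 l2 l : ℝ)
    (h1 : 0 ≤ l1) (h12 : l1 < l2) (h2 : l2 ≤ 1)
    (hl : l ∈ Set.Icc l1 l2) :
    (∫ _s in l..l2, (l2 ^ n - l1 ^ n) / (n * (l2 - l1))) +
      (∫ s in l2..(1:ℝ), s ^ (n - 1)) ≤ (1 - l ^ n) / n := by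
  obtain ⟨hl1, hl2⟩ := hl
  have hn0 : (0:ℝ) < n := by exact_mod_cast hn
  have hcast : ((n - 1 : ℕ) : ℝ) + 1 = (n : ℝ) := by
    have : n - 1 + 1 = n := Nat.succ_pred_eq_of_pos hn
    exact_mod_cast congrArg (Nat.cast (R := ℝ)) this
  have hI2 : (∫ s in l2..(1:ℝ), s ^ (n - 1)) = (1 - l2 ^ n) / n := by
    rw [integral_pow]
    rw [show (n - 1) + 1 = n from Nat.succ_pred_eq_of_pos hn, one_pow, hcast]
  have hI1 : (∫ _s in l..l2, (l2 ^ n - l1 ^ n) / (n * (l2 - l1)))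
      = (l2 - l) * ((l2 ^ n - l1 ^ n) / (n * (l2 - l1))) := by
    rw [intervalIntegral.integral_const, smul_eq_mul]
  rw [hI1, hI2]
  -- key inequality
  have key : (l2 - l) * ((l2 ^ n - l1 ^ n) / (l2 - l1)) ≤ l2 ^ n - l ^ n := by
    rcases eq_or_lt_of_le hl2 with rfl | hll2
    · simp
    · have hconv : ConvexOn ℝ (Set.Ici (0:ℝ)) fun x : ℝ => x ^ n := convexOn_pow n
      have hm : ((l1:ℝ) ^ n - l2 ^ n) / (l1 - l2) ≤ (l ^ n - l2 ^ n) / (l - l2) :=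
        hconv.secant_mono (Set.mem_Ici.2 (h1.trans h12.le)) (Set.mem_Ici.2 h1)
          (Set.mem_Ici.2 (h1.trans hl1)) (ne_of_lt h12) (ne_of_lt hll2) hl1
      have h12' : (0:ℝ) < l2 - l1 := by linarith
      have hll2' : (0:ℝ) < l2 - l := by linarith
      have e1 : (l1 ^ n - l2 ^ n) / (l1 - l2) = (l2 ^ n - l1 ^ n) / (l2 - l1) := by
        rw [← neg_div_neg_eq]; congr 1 <;> ring
      have e2 : (l ^ n - l2 ^ n) / (l - l2) = (l2 ^ n - l ^ n) / (l2 - l) := by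
        rw [← neg_div_neg_eq]; congr 1 <;> ring
      have hm' : (l2 ^ n - l1 ^ n) / (l2 - l1) ≤ (l2 ^ n - l ^ n) / (l2 - l) := by
        rw [← e1, ← e2]; exact hm
      calc (l2 - l) * ((l2 ^ n - l1 ^ n) / (l2 - l1))
          ≤ (l2 - l) * ((l2 ^ n - l ^ n) / (l2 - l)) :=
            mul_le_mul_of_nonneg_left hm' hll2'.le
        _ = l2 ^ n - l ^ n := by field_simp
  have : (l2 - l) * ((l2 ^ n - l1 ^ n) / (n * (l2 - l1)))
      = ((l2 - l) * ((l2 ^ n - l1 ^ n) / (l2 - l1))) / n := by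
    field_simp
  rw [this]
  rw [← add_div, div_le_div_iff₀ hn0 hn0] at *
  nlinarith [key, hn0]
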